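/- Let μ > 1, 0 < α < 1 and c > 0 be real numbers, and let r : ℕ → ℝ be nonnegative with r(0) = 0 and r(n)·n^μ·α^n → c as n → ∞. Define δ₁(n) := ∑_{x=0}^n (n − x + 1)·r(x) and, for 0 ≤ x ≤ n, p_n(x) := (n − x + 1)·r(x)/δ₁(n). Then: (i) δ₁(n)·n^μ·α^n → c/(1−α)² as n → ∞; and (ii) for any sequence (x_n) with 0 ≤ x_n ≤ n and liminf_{n→∞} p_n(x_n) > 0, the sequence (n − x_n) is bounded. -/

import Mathlib

open Filter

lemma polyGeom_tendsto_zero {β : ℝ} (hb0 : 0 < β) (hb1 : β < 1) (μ : ℝ) :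
    Tendsto (fun j : ℕ => ((j:ℝ)+1) * ((j:ℝ)+1)^μ * β^j) atTop (nhds 0) := by
  set K := ⌈μ⌉₊ + 1 with hK
  have hsum : Summable (fun m : ℕ => (m:ℝ)^K * β^m) :=
    summable_pow_mul_geometric_of_norm_lt_one K
      (by rw [Real.norm_eq_abs, abs_of_pos hb0]; exact hb1)
  have h0 : Tendsto (fun m : ℕ => (m:ℝ)^K * β^m) atTop (nhds 0) := hsum.tendsto_atTop_zero
  have h1 : Tendsto (fun j : ℕ => ((j+1:ℕ):ℝ)^K * β^(j+1)) atTop (nhds 0) :=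
    h0.comp (tendsto_add_atTop_nat 1)
  have h2 := h1.const_mul β⁻¹
  rw [mul_zero] at h2
  have h3 : Tendsto (fun j : ℕ => ((j:ℝ)+1)^K * β^j) atTop (nhds 0) := by
    refine h2.congr fun j => ?_
    push_cast
    rw [pow_succ]
    field_simp
    ring
  refine squeeze_zero (fun j => by positivity) (fun j => ?_) h3
  have hbase : (1:ℝ) ≤ (j:ℝ)+1 := by have := Nat.cast_nonneg (α := ℝ) j; linarith
  have hrp : ((j:ℝ)+1)^μ ≤ ((j:ℝ)+1)^(⌈μ⌉₊:ℕ) := by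
    rw [← Real.rpow_natCast ((j:ℝ)+1) ⌈μ⌉₊]
    exact Real.rpow_le_rpow_of_exponent_le hbase (Nat.le_ceil μ)
  have hstep : ((j:ℝ)+1) * ((j:ℝ)+1)^μ ≤ ((j:ℝ)+1)^K := by
    rw [hK, pow_succ']
    exact mul_le_mul_of_nonneg_left hrp (by positivity)
  have hb : (0:ℝ) ≤ β^j := by positivity
  exact mul_le_mul_of_nonneg_right hstep hb

lemma polyGeom_bddAbove {β : ℝ} (hb0 : 0 < β) (hb1 : β < 1) (μ : ℝ) :
    ∃ C : ℝ, 1 ≤ C ∧ ∀ j : ℕ, ((j:ℝ)+1) * ((j:ℝ)+1)^μ * β^j ≤ C := by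
  obtain ⟨C₀, hC₀⟩ := (polyGeom_tendsto_zero hb0 hb1 μ).bddAbove_range
  exact ⟨max C₀ 1, le_max_right _ _,
    fun j => le_trans (hC₀ (Set.mem_range_self j)) (le_max_left _ _)⟩


/- Lemma 2: `δ₁(n) = ∑_{x=0}^n (n-x+1)·r(x)` counts structures of length `n`
with a unique irreducible substructure and `p_n(x) = (n-x+1)·r(x)/δ₁(n)` is the
conditional probability that the unique irreducible substructure has size `x`.
Then (i) `δ₁(n)·n^μ·α^n → c/(1-α)²`, and (ii) if `liminf p_n(x_n) > 0` then
`n - x_n` is bounded (the unique irreducible substructure has size `n - O(1)`). -/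
theorem stmt_9 (μ α c : ℝ) (hμ : 1 < μ) (hα0 : 0 < α) (hα1 : α < 1) (hc : 0 < c)
    (r : ℕ → ℝ) (hr0 : r 0 = 0) (hrpos : ∀ n, 0 ≤ r n)
    (hasym : Tendsto (fun n : ℕ => r n * (n : ℝ) ^ μ * α ^ n) atTop (nhds c))
    (δ₁ : ℕ → ℝ)
    (hδ₁ : ∀ n, δ₁ n = ∑ x ∈ Finset.range (n + 1), ((n : ℝ) - x + 1) * r x)
    (p : ℕ → ℕ → ℝ)
    (hp : ∀ n x, p n x = ((n : ℝ) - x + 1) * r x / δ₁ n) :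
    Tendsto (fun n : ℕ => δ₁ n * (n : ℝ) ^ μ * α ^ n) atTop
        (nhds (c / (1 - α) ^ 2)) ∧
      ∀ x : ℕ → ℕ, (∀ n, x n ≤ n) →
        0 < atTop.liminf (fun n => p n (x n)) →
        ∃ B : ℕ, ∀ n, n - x n ≤ B := by
  -- basic quantities
  set β : ℝ := Real.sqrt α with hβdef
  have hb0 : 0 < β := Real.sqrt_pos.2 hα0
  have hb1 : β < 1 := by
    have := Real.sqrt_lt_sqrt hα0.le hα1
    rwa [Real.sqrt_one] at this
  have hββ : β * β = α := Real.mul_self_sqrt hα0.le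
  -- bound M on r n * n^μ * α^n
  obtain ⟨M₀, hM₀⟩ := hasym.bddAbove_range
  set M : ℝ := max M₀ 1 with hMdef
  have hM1 : (1:ℝ) ≤ M := le_max_right _ _
  have hM0 : (0:ℝ) < M := lt_of_lt_of_le one_pos hM1
  have hM : ∀ n : ℕ, r n * (n:ℝ)^μ * α^n ≤ M :=
    fun n => le_trans (hM₀ (Set.mem_range_self n)) (le_max_left _ _)
  -- bound C on (j+1)*(j+1)^μ*β^j
  obtain ⟨C, hC1, hC⟩ := polyGeom_bddAbove hb0 hb1 μ
  have hC0 : (0:ℝ) < C := lt_of_lt_of_le one_pos hC1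
  -- the key pointwise bound
  have hFle : ∀ n j : ℕ, j ≤ n →
      ((j:ℝ)+1) * r (n - j) * (n:ℝ)^μ * α^n ≤ M * C * β^j := by
    intro n j hj
    rcases Nat.eq_zero_or_pos (n - j) with hm | hm
    · rw [hm, hr0]
      have : (0:ℝ) ≤ M * C * β^j := by positivity
      simpa using this
    · set m := n - j with hmdef
      have hnm : m + j = n := Nat.sub_add_cancel hj
      have hm1 : (1:ℝ) ≤ (m:ℝ) := by exact_mod_cast hm
      have hmpos : (0:ℝ) < (m:ℝ) := lt_of_lt_of_le one_pos hm1
      -- n ≤ m * (j+1)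
      have hnle : (n:ℝ) ≤ (m:ℝ) * ((j:ℝ)+1) := by
        have : (n:ℝ) = (m:ℝ) + (j:ℝ) := by exact_mod_cast hnm.symm
        nlinarith [Nat.cast_nonneg (α := ℝ) j]
      have hnrp : (n:ℝ)^μ ≤ (m:ℝ)^μ * ((j:ℝ)+1)^μ := by
        rw [← Real.mul_rpow hmpos.le (by positivity)]
        exact Real.rpow_le_rpow (Nat.cast_nonneg n) hnle (by linarith)
      have hαn : α^n = α^m * α^j := by rw [← pow_add, hnm]
      have hrm := hM m
      have hmp : (0:ℝ) < (m:ℝ)^μ := Real.rpow_pos_of_pos hmpos μ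
      have hjp : (0:ℝ) < ((j:ℝ)+1)^μ := Real.rpow_pos_of_pos (by positivity) μ
      have hαj : α^j = β^j * β^j := by rw [← mul_pow, hββ]
      have hCj := hC j
      have hrnn : (0:ℝ) ≤ r m := hrpos m
      have hαm : (0:ℝ) < α^m := pow_pos hα0 m
      have hβj : (0:ℝ) < β^j := pow_pos hb0 j
      -- chain
      have step1 : ((j:ℝ)+1) * r m * (n:ℝ)^μ * α^n
          ≤ ((j:ℝ)+1) * ((j:ℝ)+1)^μ * α^j * (r m * (m:ℝ)^μ * α^m) := by
        rw [hαn]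
        have h1 : r m * (n:ℝ)^μ ≤ r m * ((m:ℝ)^μ * ((j:ℝ)+1)^μ) :=
          mul_le_mul_of_nonneg_left hnrp hrnn
        have coefnn : (0:ℝ) ≤ ((j:ℝ)+1) * α^j * α^m := by positivity
        calc ((j:ℝ)+1) * r m * (n:ℝ)^μ * (α^m * α^j)
            = (((j:ℝ)+1) * α^j * α^m) * (r m * (n:ℝ)^μ) := by ring
          _ ≤ (((j:ℝ)+1) * α^j * α^m) * (r m * ((m:ℝ)^μ * ((j:ℝ)+1)^μ)) :=
              mul_le_mul_of_nonneg_left h1 coefnn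
          _ = ((j:ℝ)+1) * ((j:ℝ)+1)^μ * α^j * (r m * (m:ℝ)^μ * α^m) := by ring
      have step2 : ((j:ℝ)+1) * ((j:ℝ)+1)^μ * α^j * (r m * (m:ℝ)^μ * α^m)
          ≤ ((j:ℝ)+1) * ((j:ℝ)+1)^μ * α^j * M := by
        refine mul_le_mul_of_nonneg_left hrm ?_
        positivity
      have step3 : ((j:ℝ)+1) * ((j:ℝ)+1)^μ * α^j * M ≤ M * C * β^j := by
        rw [hαj]
        have h4 : (((j:ℝ)+1) * ((j:ℝ)+1)^μ * β^j) * β^j ≤ C * β^j :=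
          mul_le_mul_of_nonneg_right hCj hβj.le
        calc ((j:ℝ)+1) * ((j:ℝ)+1)^μ * (β^j * β^j) * M
            = M * ((((j:ℝ)+1) * ((j:ℝ)+1)^μ * β^j) * β^j) := by ring
          _ ≤ M * (C * β^j) := mul_le_mul_of_nonneg_left h4 hM0.le
          _ = M * C * β^j := by ring
      linarith
  -- the doubly-indexed family
  set F : ℕ → ℕ → ℝ :=
    fun n j => if j ≤ n then ((j:ℝ)+1) * r (n - j) * (n:ℝ)^μ * α^n else 0 with hFdef
  have hFnonneg : ∀ n j, 0 ≤ F n j := by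
    intro n j
    rw [hFdef]
    dsimp only
    split
    · have := hrpos (n - j)
      have : (0:ℝ) ≤ ((j:ℝ)+1) * r (n-j) := by positivity
      positivity
    · exact le_refl 0
  have hFbound : ∀ n j, F n j ≤ M * C * β^j := by
    intro n j
    rw [hFdef]
    dsimp only
    split
    · exact hFle n j (by assumption)
    · positivity
  -- identity: δ₁ n * n^μ * α^n = ∑' j, F n j
  have hkey : ∀ n : ℕ, δ₁ n * (n:ℝ)^μ * α^n = ∑' j, F n j := by
    intro n
    have hzero : ∀ j ∉ Finset.range (n+1), F n j = 0 := by
      intro j hj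
      rw [Finset.mem_range, Nat.lt_succ_iff] at hj
      rw [hFdef]
      dsimp only
      rw [if_neg hj]
    rw [tsum_eq_sum hzero, hδ₁ n, Finset.sum_mul, Finset.sum_mul]
    rw [← Finset.sum_range_reflect (fun x => ((n:ℝ) - x + 1) * r x * (n:ℝ)^μ * α^n) (n+1)]
    refine Finset.sum_congr rfl fun j hj => ?_
    rw [Finset.mem_range, Nat.lt_succ_iff] at hj
    rw [hFdef]
    dsimp only
    rw [if_pos hj]
    have h1 : n + 1 - 1 - j = n - j := by omega
    rw [h1]
    have h2 : ((n - j : ℕ) : ℝ) = (n:ℝ) - (j:ℝ) := by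
      rw [Nat.cast_sub hj]
    rw [h2]
    ring
  -- pointwise limits
  have hlimpt : ∀ j : ℕ, Tendsto (fun n => F n j) atTop (nhds (((j:ℝ)+1) * α^j * c)) := by
    intro j
    have T1 : Tendsto (fun n : ℕ => r (n - j) * ((n-j:ℕ):ℝ)^μ * α^(n-j)) atTop (nhds c) :=
      hasym.comp (tendsto_sub_atTop_nat j)
    have Tm : Tendsto (fun n : ℕ => ((n-j:ℕ):ℝ)) atTop atTop :=
      tendsto_natCast_atTop_atTop.comp (tendsto_sub_atTop_nat j)
    have Tinner : Tendsto (fun n : ℕ => (n:ℝ)/((n-j:ℕ):ℝ)) atTop (nhds 1) := by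
      have Tfrac : Tendsto (fun n : ℕ => (j:ℝ)/((n-j:ℕ):ℝ)) atTop (nhds 0) :=
        tendsto_const_nhds.div_atTop Tm
      have := Tfrac.const_add (1:ℝ)
      rw [add_zero] at this
      refine this.congr' ?_
      filter_upwards [eventually_ge_atTop (j+1)] with n hn
      have hjn : j ≤ n := le_of_lt hn
      have hm1 : 1 ≤ n - j := by omega
      have hmpos : (0:ℝ) < ((n-j:ℕ):ℝ) := by exact_mod_cast Nat.lt_of_lt_of_le Nat.zero_lt_one hm1
      have h2 : ((n - j : ℕ) : ℝ) = (n:ℝ) - (j:ℝ) := by rw [Nat.cast_sub hjn]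
      have hne : (n:ℝ) - (j:ℝ) ≠ 0 := by rw [← h2]; exact hmpos.ne'
      rw [h2]
      field_simp
      ring
    have T2 : Tendsto (fun n : ℕ => ((n:ℝ)/((n-j:ℕ):ℝ))^μ) atTop (nhds 1) := by
      have := Tinner.rpow_const (p := μ) (Or.inl one_ne_zero)
      rwa [Real.one_rpow] at this
    have Tprod := (T1.mul T2).const_mul (((j:ℝ)+1) * α^j)
    have hval : (((j:ℝ)+1) * α^j) * (c * 1) = ((j:ℝ)+1) * α^j * c := by ring
    rw [hval] at Tprod
    refine Tprod.congr' ?_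
    filter_upwards [eventually_ge_atTop (j+1)] with n hn
    have hjn : j ≤ n := le_of_lt hn
    have hm1 : 1 ≤ n - j := by omega
    have hmpos : (0:ℝ) < ((n-j:ℕ):ℝ) := by exact_mod_cast Nat.lt_of_lt_of_le Nat.zero_lt_one hm1
    have hmp : (0:ℝ) < ((n-j:ℕ):ℝ)^μ := Real.rpow_pos_of_pos hmpos μ
    have hdiv : ((n:ℝ)/((n-j:ℕ):ℝ))^μ = (n:ℝ)^μ / ((n-j:ℕ):ℝ)^μ :=
      Real.div_rpow (Nat.cast_nonneg n) hmpos.le μ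
    have hαn : α^n = α^(n-j) * α^j := by rw [← pow_add, Nat.sub_add_cancel hjn]
    rw [hFdef]
    dsimp only
    rw [if_pos hjn, hdiv, hαn]
    have hc2 : ((n-j:ℕ):ℝ)^μ * (((n-j:ℕ):ℝ)^μ)⁻¹ = 1 := mul_inv_cancel₀ hmp.ne'
    calc ((j:ℝ)+1) * α^j * (r (n - j) * ((n-j:ℕ):ℝ)^μ * α^(n-j) * ((n:ℝ)^μ / ((n-j:ℕ):ℝ)^μ))
        = (((j:ℝ)+1) * r (n - j) * (n:ℝ)^μ * (α^(n-j) * α^j))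
            * (((n-j:ℕ):ℝ)^μ * (((n-j:ℕ):ℝ)^μ)⁻¹) := by
          rw [div_eq_mul_inv]; ring
      _ = ((j:ℝ)+1) * r (n - j) * (n:ℝ)^μ * (α^(n-j) * α^j) := by rw [hc2, mul_one]
  -- summability of the bound and limit sum
  have hgsum : Summable (fun j : ℕ => M * C * β^j) :=
    (summable_geometric_of_lt_one hb0.le hb1).mul_left (M*C)
  have hpart1 : Tendsto (fun n : ℕ => ∑' j, F n j) atTop
      (nhds (∑' j : ℕ, ((j:ℝ)+1) * α^j * c)) := by
    refine tendsto_tsum_of_dominated_convergence hgsum hlimpt ?_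
    filter_upwards with n
    intro k
    rw [Real.norm_eq_abs, abs_of_nonneg (hFnonneg n k)]
    exact hFbound n k
  -- value of the limit sum
  have hsumval : ∑' j : ℕ, ((j:ℝ)+1) * α^j * c = c / (1-α)^2 := by
    have hs1 : Summable (fun j : ℕ => (j:ℝ) * α^j) := by
      have := summable_pow_mul_geometric_of_norm_lt_one (R := ℝ) 1
        (by rw [Real.norm_eq_abs, abs_of_pos hα0]; exact hα1)
      simpa using this
    have hs2 : Summable (fun j : ℕ => α^j) := summable_geometric_of_lt_one hα0.le hα1
    have h1 : ∑' j : ℕ, (j:ℝ) * α^j = α / (1-α)^2 :=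
      tsum_coe_mul_geometric_of_norm_lt_one (by rw [Real.norm_eq_abs, abs_of_pos hα0]; exact hα1)
    have h2 : ∑' j : ℕ, α^j = (1-α)⁻¹ := tsum_geometric_of_lt_one hα0.le hα1
    have hsplit : ∀ j : ℕ, ((j:ℝ)+1) * α^j * c = c * ((j:ℝ) * α^j) + c * α^j := by
      intro j; ring
    rw [tsum_congr hsplit, Summable.tsum_add (hs1.mul_left c) (hs2.mul_left c),
      tsum_mul_left, tsum_mul_left, h1, h2]
    have h1α : (1:ℝ) - α ≠ 0 := by linarith
    field_simp
    ring
  have part1 : Tendsto (fun n : ℕ => δ₁ n * (n:ℝ)^μ * α^n) atTop (nhds (c / (1-α)^2)) := by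
    rw [← hsumval]
    exact hpart1.congr fun n => (hkey n).symm
  refine ⟨part1, ?_⟩
  -- part (ii)
  intro x hx hlim
  set L : ℝ := c / (1-α)^2 with hLdef
  have hL : 0 < L := by
    rw [hLdef]
    have h1α : (0:ℝ) < 1 - α := by linarith
    positivity
  -- p is nonneg along x
  have hδnn : ∀ n, 0 ≤ δ₁ n := by
    intro n
    rw [hδ₁ n]
    refine Finset.sum_nonneg fun i hi => ?_
    rw [Finset.mem_range, Nat.lt_succ_iff] at hi
    have : ((i:ℕ):ℝ) ≤ (n:ℝ) := by exact_mod_cast hi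
    have h1 : (0:ℝ) ≤ (n:ℝ) - i + 1 := by linarith
    exact mul_nonneg h1 (hrpos i)
  have hpnn : ∀ n, 0 ≤ p n (x n) := by
    intro n
    rw [hp]
    have : ((x n : ℕ):ℝ) ≤ (n:ℝ) := by exact_mod_cast hx n
    have h1 : (0:ℝ) ≤ (n:ℝ) - x n + 1 := by linarith
    exact div_nonneg (mul_nonneg h1 (hrpos (x n))) (hδnn n)
  have hbddu : atTop.IsBoundedUnder (· ≥ ·) (fun n => p n (x n)) :=
    isBoundedUnder_of ⟨0, fun n => hpnn n⟩
  set ε : ℝ := atTop.liminf (fun n => p n (x n)) / 2 with hεdef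
  have hε : 0 < ε := by positivity
  have hev : ∀ᶠ n in atTop, ε < p n (x n) :=
    eventually_lt_of_lt_liminf (by rw [hεdef]; linarith) hbddu
  have hδev : ∀ᶠ n in atTop, L/2 < δ₁ n * (n:ℝ)^μ * α^n :=
    part1.eventually (eventually_gt_nhds (by linarith))
  -- choose D
  set η : ℝ := ε * L / (2 * M * C) with hηdef
  have hη : 0 < η := by rw [hηdef]; positivity
  obtain ⟨D, hD⟩ := exists_pow_lt_of_lt_one hη hb1
  have hevD : ∀ᶠ n in atTop, n - x n ≤ D := by
    filter_upwards [hev, hδev, eventually_ge_atTop 1] with n h1 h2 h3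
    by_contra hcon
    push_neg at hcon
    set d := n - x n with hddef
    have hdD : D ≤ d := le_of_lt hcon
    have hβd : β^d ≤ β^D := pow_le_pow_of_le_one hb0.le hb1.le hdD
    have hβdη : β^d < η := lt_of_le_of_lt hβd hD
    -- quantities
    have hnpos : (0:ℝ) < (n:ℝ) := by exact_mod_cast h3
    have hw : (0:ℝ) < (n:ℝ)^μ * α^n := mul_pos (Real.rpow_pos_of_pos hnpos μ) (pow_pos hα0 n)
    set w : ℝ := (n:ℝ)^μ * α^n with hwdef
    have hδw : L/2 < δ₁ n * w := by
      rw [hwdef]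
      have e : δ₁ n * ((n:ℝ)^μ * α^n) = δ₁ n * (n:ℝ)^μ * α^n := by ring
      linarith
    have hδpos : 0 < δ₁ n := by
      by_contra hno
      push_neg at hno
      have : δ₁ n * w ≤ 0 := mul_nonpos_of_nonpos_of_nonneg hno hw.le
      linarith
    -- numerator = F-type quantity
    have hxd : n - d = x n := by omega
    have hcast : ((n:ℝ) - x n + 1) = (d:ℝ) + 1 := by
      have : ((d:ℕ):ℝ) = (n:ℝ) - (x n : ℝ) := by
        rw [hddef, Nat.cast_sub (hx n)]
      linarith [this]
    set N : ℝ := ((d:ℝ) + 1) * r (x n) with hNdef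
    have hNw : N * w ≤ M * C * β^d := by
      have := hFle n d (Nat.sub_le n (x n))
      rw [hxd] at this
      rw [hNdef, hwdef]
      calc ((d:ℝ) + 1) * r (x n) * ((n:ℝ)^μ * α^n)
          = ((d:ℝ)+1) * r (x n) * (n:ℝ)^μ * α^n := by ring
        _ ≤ M * C * β^d := this
    have hpN : ε < N / δ₁ n := by
      rw [hNdef, ← hcast]
      rw [hp] at h1
      exact h1
    have hεδ : ε * δ₁ n < N := (lt_div_iff₀ hδpos).mp hpN
    have hMCη : M * C * η = ε * (L/2) := by
      rw [hηdef]
      field_simp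
    have e1 : ε * (L/2) < ε * (δ₁ n * w) := mul_lt_mul_of_pos_left hδw hε
    have e1' : ε * (δ₁ n * w) = ε * δ₁ n * w := by ring
    have e2 : ε * δ₁ n * w < N * w := mul_lt_mul_of_pos_right hεδ hw
    have e3 : M * C * β^d < M * C * η := mul_lt_mul_of_pos_left hβdη (mul_pos hM0 hC0)
    linarith [e1, e1', e2, hNw, e3, hMCη]
  obtain ⟨N₀, hN₀⟩ := eventually_atTop.mp hevD
  refine ⟨D + N₀, fun n => ?_⟩
  rcases le_or_gt N₀ n with h | h
  · exact le_trans (hN₀ n h) (Nat.le_add_right D N₀)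
  · omega
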